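/- Let R be a 3-CNF formula with L variables. With p and F as in the standard construction, if R is satisfied by truth assignment t then the maximal frequency f of the itemset W over all distributions satisfying the F-frequencies of p satisfies f ≥ 2^{-L} > 0. -/
import Mathlib


open Finset

def IsDist {Ω : Type*} [Fintype Ω] (p : Ω → ℝ) : Prop :=
  (∀ x, 0 ≤ p x) ∧ ∑ x, p x = 1

/-- The truth value of clause `i` of the 3-CNF `R` under assignment `t`; a clause is a
triple of literals, each a pair (variable, sign). -/
def clauseVal {L M : ℕ} (R : Fin M → Fin 3 → Fin L × Bool)
    (t : Fin L → Bool) (i : Fin M) : Bool :=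
  decide (∃ j : Fin 3, t (R i j).1 = (R i j).2)

/-- The construction distribution `p(V = t, W = u) = 2^{-L}` if `u = C(t)`, else `0`. -/
noncomputable def constr {L M : ℕ} (R : Fin M → Fin 3 → Fin L × Bool) :
    (Fin L → Bool) × (Fin M → Bool) → ℝ :=
  fun x => if x.2 = (fun i => clauseVal R x.1 i) then ((2 : ℝ) ^ L)⁻¹ else 0

/-- The frequency `p(S = 1, T = 1)` for an itemset with variable-part `S` and
clause-part `T`. -/
def freq2 {L M : ℕ} (p : (Fin L → Bool) × (Fin M → Bool) → ℝ)
    (S : Finset (Fin L)) (T : Finset (Fin M)) : ℝ :=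
  ∑ x : (Fin L → Bool) × (Fin M → Bool),
    if (∀ i ∈ S, x.1 i = true) ∧ (∀ j ∈ T, x.2 j = true) then p x else 0

/-- The set of variables appearing in clause `i`. -/
def clauseVars {L M : ℕ} (R : Fin M → Fin 3 → Fin L × Bool) (i : Fin M) :
    Finset (Fin L) :=
  Finset.image (fun j => (R i j).1) Finset.univ

lemma constr_nonneg {L M : ℕ} (R : Fin M → Fin 3 → Fin L × Bool) (x) :
    0 ≤ constr R x := by
  unfold constr; split <;> positivity

lemma constr_isDist {L M : ℕ} (R : Fin M → Fin 3 → Fin L × Bool) :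
    IsDist (constr R) := by
  refine ⟨constr_nonneg R, ?_⟩
  rw [Fintype.sum_prod_type]
  have : ∀ a : Fin L → Bool, ∑ b : Fin M → Bool, constr R (a, b) = ((2:ℝ)^L)⁻¹ := by
    intro a
    rw [Finset.sum_eq_single (fun i => clauseVal R a i)]
    · simp [constr]
    · intro b _ hb; simp [constr, hb]
    · simp
  simp only [this, Finset.sum_const, card_univ, Fintype.card_fun, Fintype.card_bool,
    Fintype.card_fin, nsmul_eq_mul]
  push_cast
  rw [mul_inv_cancel₀ (by positivity)]

theorem sat_implies_max_freq_pos {L M : ℕ} (R : Fin M → Fin 3 → Fin L × Bool)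
    (t : Fin L → Bool) (ht : ∀ i, clauseVal R t i = true) :
    ((2 : ℝ) ^ L)⁻¹ ≤
      sSup {f : ℝ | ∃ q : (Fin L → Bool) × (Fin M → Bool) → ℝ, IsDist q ∧
        (∀ (i : Fin M) (S : Finset (Fin L)) (T : Finset (Fin M)),
          S ⊆ clauseVars R i → T ⊆ {i} → freq2 q S T = freq2 (constr R) S T) ∧
        freq2 q ∅ Finset.univ = f} ∧
    (0 : ℝ) < ((2 : ℝ) ^ L)⁻¹ := by
  constructor
  · have hmem : freq2 (constr R) ∅ Finset.univ ∈
        {f : ℝ | ∃ q : (Fin L → Bool) × (Fin M → Bool) → ℝ, IsDist q ∧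
        (∀ (i : Fin M) (S : Finset (Fin L)) (T : Finset (Fin M)),
          S ⊆ clauseVars R i → T ⊆ {i} → freq2 q S T = freq2 (constr R) S T) ∧
        freq2 q ∅ Finset.univ = f} :=
      ⟨constr R, constr_isDist R, fun _ _ _ _ _ => rfl, rfl⟩
    have hbdd : BddAbove {f : ℝ | ∃ q : (Fin L → Bool) × (Fin M → Bool) → ℝ, IsDist q ∧
        (∀ (i : Fin M) (S : Finset (Fin L)) (T : Finset (Fin M)),
          S ⊆ clauseVars R i → T ⊆ {i} → freq2 q S T = freq2 (constr R) S T) ∧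
        freq2 q ∅ Finset.univ = f} := by
      refine ⟨1, fun f hf => ?_⟩
      obtain ⟨q, hq, -, hfq⟩ := hf
      rw [← hfq, ← hq.2]
      exact Finset.sum_le_sum fun x _ => by split <;> [exact le_rfl; exact hq.1 x]
    refine le_trans ?_ (le_csSup hbdd hmem)
    have hle : constr R (t, fun j => true) ≤ freq2 (constr R) ∅ Finset.univ := by
      unfold freq2
      rw [← Finset.sum_filter]
      refine Finset.single_le_sum (f := fun x => constr R x)
        (fun x _ => constr_nonneg R x) ?_
      simp
    have : constr R (t, fun j => true) = ((2:ℝ)^L)⁻¹ := by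
      simp [constr, funext fun i => (ht i).symm]
    linarith
  · positivity
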